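/- Let d ≥ 4 be an integer, p a prime number, and t a real number such that either d ≥ 5 and t ≥ 1, or d = 4 and t ≥ (1+√3)/2. Let a, b, a', b' be complex numbers with b ≠ 0 and b' ≠ 0, satisfying a'^d / b'² − p^{−(d−3)} = a and a' = b. If |b| ≥ (1 + 1/(2t))·|a| and |a| ≥ t, then |b'| ≥ (1 + 1/(2t))·|a'|, |a'| ≥ t, and |b'| ≥ |b|^{(d−1)/2}. -/

import Mathlib

/-- Let `d ≥ 4`, `p` prime, and `t` a real number with either (`d ≥ 5` and `t ≥ 1`) or
(`d = 4` and `t ≥ (1+√3)/2`).  If `a, b, a', b' ∈ ℂ` with `b, b' ≠ 0` satisfy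
`a'^d / b'² - p^{-(d-3)} = a` and `a' = b` (i.e. `f_{d,p}(a',b') = (a,b)`), and
`|b| ≥ (1 + 1/(2t))·|a|` and `|a| ≥ t`, then `|b'| ≥ (1 + 1/(2t))·|a'|`, `|a'| ≥ t` and
`|b'| ≥ |b|^{(d-1)/2}`. -/
private lemma stmt16_aux (t s : ℝ) (hs3 : s ^ 2 = 3) (hs1 : 1 ≤ s)
    (ht : (1 + s) / 2 ≤ t) : (2*t+1) ^ 2 ≤ (t + 1/2) * (2*t) ^ 2 := by
  nlinarith [mul_nonneg (by linarith : (0:ℝ) ≤ 2*t - 1 - s)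
    (by nlinarith : (0:ℝ) ≤ 2*t^2 + s*t + (s-1)/2)]

set_option maxHeartbeats 1000000 in
theorem stmt16 (d p : ℕ) (hd : 4 ≤ d) (hp : p.Prime) (t : ℝ)
    (ht : (5 ≤ d ∧ 1 ≤ t) ∨ (d = 4 ∧ (1 + Real.sqrt 3) / 2 ≤ t))
    (a b a' b' : ℂ) (hb : b ≠ 0) (hb' : b' ≠ 0)
    (hmap : a' ^ d / b' ^ 2 - ((p : ℂ) ^ (d - 3))⁻¹ = a) (ha' : a' = b)
    (hab : (1 + 1 / (2 * t)) * ‖a‖ ≤ ‖b‖)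
    (hat : t ≤ ‖a‖) :
    (1 + 1 / (2 * t)) * ‖a'‖ ≤ ‖b'‖ ∧
    t ≤ ‖a'‖ ∧
    ‖b‖ ^ (((d : ℝ) - 1) / 2) ≤ ‖b'‖ := by
  subst ha'
  have hs3 : Real.sqrt 3 ^ 2 = 3 := Real.sq_sqrt (by norm_num)
  have hs1 : (1:ℝ) ≤ Real.sqrt 3 := by nlinarith [Real.sqrt_nonneg 3]
  have ht1 : (1:ℝ) ≤ t := by
    rcases ht with ⟨_, h⟩ | ⟨_, h⟩
    · exact h
    · linarith
  have htpos : (0:ℝ) < t := by linarith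
  have h2t : (0:ℝ) < 2 * t := by linarith
  set A := ‖a‖ with hA
  set B := ‖a'‖ with hBdef
  set B' := ‖b'‖ with hB'def
  have hBpos : 0 < B := norm_pos_iff.mpr hb
  have hB'pos : 0 < B' := norm_pos_iff.mpr hb'
  have hAnn : 0 ≤ A := norm_nonneg a
  -- A/(2t) ≥ 1/2
  have h12 : (1:ℝ)/2 ≤ 1/(2*t) * A := by
    rw [div_mul_eq_mul_div, le_div_iff₀ h2t]
    linarith
  have hab' : A + 1/(2*t) * A ≤ B := by
    have h := hab
    rw [add_mul, one_mul] at h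
    exact h
  have hB : A + 1/2 ≤ B := by linarith
  have hBt : t + 1/2 ≤ B := by linarith
  have hB1 : (1:ℝ) ≤ B := by linarith
  -- the epsilon term
  set e : ℂ := ((p : ℂ) ^ (d - 3))⁻¹ with he
  have hp2 : (2:ℝ) ≤ (p:ℝ) := by exact_mod_cast hp.two_le
  have hppow : (2:ℝ) ≤ (p:ℝ) ^ (d - 3) := by
    have h1 : (p:ℝ) ^ 1 ≤ (p:ℝ) ^ (d - 3) :=
      pow_le_pow_right₀ (by linarith) (by omega)
    simpa using le_trans hp2 (by simpa using h1)
  have habse : ‖e‖ ≤ 1/2 := by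
    rw [he, norm_inv, norm_pow, Complex.norm_natCast]
    rw [inv_le_comm₀ (by linarith) (by norm_num)]
    simpa using hppow
  -- key equation
  have heq : a' ^ d = b' ^ 2 * (a + e) := by
    field_simp at hmap
    linear_combination hmap
  have habs : B ^ d = B' ^ 2 * ‖a + e‖ := by
    have h := congrArg norm heq
    simpa [norm_mul, norm_pow] using h
  have hae : ‖a + e‖ ≤ B := by
    calc ‖a + e‖ ≤ A + ‖e‖ := norm_add_le a e
    _ ≤ A + 1/2 := by linarith
    _ ≤ B := hB
  have hdB : B ^ d ≤ B' ^ 2 * B := by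
    rw [habs]
    have h := sq_nonneg B'
    nlinarith [hae]
  have hBd1 : B ^ (d - 1) ≤ B' ^ 2 := by
    have h : B ^ (d - 1) * B ≤ B' ^ 2 * B := by
      rw [← pow_succ, Nat.sub_add_cancel (by omega)]
      exact hdB
    exact le_of_mul_le_mul_right h hBpos
  set c : ℝ := 1 + 1/(2*t) with hc
  have hc0 : (0:ℝ) < c := by positivity
  refine ⟨?_, by linarith, ?_⟩
  · -- first goal : c * B ≤ B'
    have hsq : (c * B) ^ 2 ≤ B' ^ 2 := by
      rcases ht with ⟨hd5, ht5⟩ | ⟨hd4, ht4⟩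
      · -- d ≥ 5 : B^{d-1} ≥ B^4
        have h4 : B ^ 4 ≤ B ^ (d - 1) := pow_le_pow_right₀ hB1 (by omega)
        have hcB : c ≤ B := by
          have h : 1/(2*t) ≤ 1/2 := by
            rw [div_le_div_iff₀ h2t (by norm_num)]
            linarith
          rw [hc]; linarith
        have h5 : (c * B) ^ 2 ≤ B ^ 4 := by
          nlinarith [mul_nonneg (mul_nonneg (sq_nonneg B) (sub_nonneg.2 hcB))
            (by positivity : (0:ℝ) ≤ B + c)]
        linarith
      · -- d = 4 : need c^2 ≤ B
        subst hd4
        have hkey : c ^ 2 ≤ t + 1/2 := by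
          rw [hc, show (1 + 1/(2*t)) = (2*t+1)/(2*t) by field_simp]
          rw [div_pow, div_le_iff₀ (by positivity)]
          exact stmt16_aux t (Real.sqrt 3) hs3 hs1 ht4
        have hcB : c ^ 2 ≤ B := le_trans hkey hBt
        have h3 : (c * B) ^ 2 ≤ B ^ 3 := by
          nlinarith [mul_nonneg (sq_nonneg B) (by linarith : (0:ℝ) ≤ B - c ^ 2)]
        calc (c * B) ^ 2 ≤ B ^ 3 := h3
        _ = B ^ (4 - 1) := by norm_num
        _ ≤ B' ^ 2 := hBd1
    exact le_of_pow_le_pow_left₀ two_ne_zero hB'pos.le hsq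
  · -- third goal
    have hcast : ((d - 1 : ℕ) : ℝ) = (d:ℝ) - 1 := by
      have h1 : 1 ≤ d := by omega
      push_cast [Nat.cast_sub h1]
      ring
    have hX : (B ^ (((d:ℝ) - 1)/2)) ^ 2 = B ^ (d - 1) := by
      rw [← Real.rpow_natCast (B ^ (((d:ℝ) - 1)/2)) 2, ← Real.rpow_mul hBpos.le]
      rw [← Real.rpow_natCast B (d - 1), hcast]
      norm_num
    have h : (B ^ (((d:ℝ) - 1)/2)) ^ 2 ≤ B' ^ 2 := by rw [hX]; exact hBd1
    exact le_of_pow_le_pow_left₀ two_ne_zero hB'pos.le h
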